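/- Let p > 1 and let 1 - 1/p < α2 < 1 < α1. Define w(x) = (1 - (1-x)^{α2}) - x^{α1} on [0,1]. Then w(0) = w(1) = 0 and there exists exactly one x₀ ∈ (0,1) with w(x₀) = 0, i.e. the equation x₀^{α1} + (1-x₀)^{α2} = 1 has a unique solution in (0,1). -/

import Mathlib

open Real Set

set_option maxHeartbeats 1000000 in
theorem stmt_7 (p α1 α2 : ℝ) (hp : 1 < p) (hα2 : 1 - 1/p < α2) (hα2' : α2 < 1)
    (hα1 : 1 < α1) :
    (1 - (1 - (0:ℝ)) ^ α2) - (0:ℝ) ^ α1 = 0 ∧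
    (1 - (1 - (1:ℝ)) ^ α2) - (1:ℝ) ^ α1 = 0 ∧
    ∃! x₀ : ℝ, x₀ ∈ Set.Ioo (0:ℝ) 1 ∧ x₀ ^ α1 + (1 - x₀) ^ α2 = 1 := by
  have hppos : 0 < 1 - 1/p := by
    have : 1/p < 1 := by rw [div_lt_one (by linarith)]; exact hp
    linarith
  have hα2pos : 0 < α2 := lt_trans hppos hα2
  have hα1pos : (0:ℝ) < α1 := by linarith
  have hα11 : (0:ℝ) < α1 - 1 := by linarith
  have hα21 : α2 - 1 < 0 := by linarith
  set w : ℝ → ℝ := fun x => (1 - (1 - x) ^ α2) - x ^ α1 with hw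
  set W' : ℝ → ℝ := fun x => α2 * (1 - x) ^ (α2 - 1) - α1 * x ^ (α1 - 1) with hW'
  have hw0 : w 0 = 0 := by
    simp [hw, Real.zero_rpow hα1pos.ne', Real.one_rpow]
  have hw1 : w 1 = 0 := by
    simp [hw, Real.zero_rpow hα2pos.ne', Real.one_rpow]
  have hwcont : Continuous w := by
    have c1 : Continuous fun x : ℝ => x ^ α1 := by
      rw [continuous_iff_continuousAt]
      intro x
      exact Real.continuousAt_rpow_const x α1 (Or.inr hα1pos.le)
    have c2 : Continuous fun x : ℝ => (1 - x) ^ α2 := by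
      rw [continuous_iff_continuousAt]
      intro x
      exact (Real.continuousAt_rpow_const (1 - x) α2 (Or.inr hα2pos.le)).comp
        (continuous_const.sub continuous_id).continuousAt
    exact (continuous_const.sub c2).sub c1
  have hderiv : ∀ x ∈ Ioo (0:ℝ) 1, HasDerivAt w (W' x) x := by
    intro x hx
    have hx0 : x ≠ 0 := ne_of_gt hx.1
    have hx1 : (1 - x) ≠ 0 := by have := hx.2; intro h; nlinarith [sub_eq_zero.mp h]
    have h1 : HasDerivAt (fun y : ℝ => 1 - y) (-1) x := by
      simpa using (hasDerivAt_id' x).const_sub (1:ℝ)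
    have h2 : HasDerivAt (fun y : ℝ => (1 - y) ^ α2) ((-1) * α2 * (1 - x) ^ (α2 - 1)) x :=
      h1.rpow_const (Or.inl hx1)
    have h3 : HasDerivAt (fun y : ℝ => y ^ α1) (α1 * x ^ (α1 - 1)) x :=
      Real.hasDerivAt_rpow_const (Or.inl hx0)
    have h4 := ((hasDerivAt_const x (1:ℝ)).sub h2).sub h3
    refine h4.congr_deriv (Eq.symm ?_)
    show α2 * (1 - x) ^ (α2 - 1) - α1 * x ^ (α1 - 1)
      = 0 - (-1) * α2 * (1 - x) ^ (α2 - 1) - α1 * x ^ (α1 - 1)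
    ring
  set G : ℝ → ℝ := fun c => (α1 - 1) * Real.log c + (1 - α2) * Real.log (1 - c)
      + (Real.log α1 - Real.log α2) with hG
  have hWG : ∀ c ∈ Ioo (0:ℝ) 1, W' c = 0 → G c = 0 := by
    intro c hc h
    have hc0 : 0 < c := hc.1
    have hc1 : 0 < 1 - c := by have := hc.2; linarith
    have heq : α2 * (1 - c) ^ (α2 - 1) = α1 * c ^ (α1 - 1) := by
      have h' : α2 * (1 - c) ^ (α2 - 1) - α1 * c ^ (α1 - 1) = 0 := h
      linarith
    have hlog := congrArg Real.log heq
    rw [Real.log_mul hα2pos.ne' (Real.rpow_pos_of_pos hc1 _).ne',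
        Real.log_mul hα1pos.ne' (Real.rpow_pos_of_pos hc0 _).ne',
        Real.log_rpow hc1, Real.log_rpow hc0] at hlog
    show (α1 - 1) * Real.log c + (1 - α2) * Real.log (1 - c)
        + (Real.log α1 - Real.log α2) = 0
    linarith
  have hG3 : ∀ c1 c2 c3 : ℝ, c1 ∈ Ioo (0:ℝ) 1 → c2 ∈ Ioo (0:ℝ) 1 → c3 ∈ Ioo (0:ℝ) 1 →
      c1 < c2 → c2 < c3 → G c1 = 0 → G c2 = 0 → G c3 = 0 → False := by
    intro c1 c2 c3 h1 h2 h3 h12 h23 g1 g2 g3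
    set t : ℝ := (c3 - c2) / (c3 - c1) with ht
    set u : ℝ := (c2 - c1) / (c3 - c1) with hu
    have h13 : 0 < c3 - c1 := by linarith
    have htpos : 0 < t := div_pos (by linarith) h13
    have hupos : 0 < u := div_pos (by linarith) h13
    have htu : t + u = 1 := by rw [ht, hu]; field_simp; ring
    have hc2 : t * c1 + u * c3 = c2 := by rw [ht, hu]; field_simp; ring
    have hc2' : t * (1 - c1) + u * (1 - c3) = 1 - c2 := by rw [ht, hu]; field_simp; ring
    have hne : c1 ≠ c3 := by intro h; rw [h] at h12; linarith
    have hne' : (1 - c1) ≠ (1 - c3) := fun h => hne (by linarith)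
    have hl1 : t * Real.log c1 + u * Real.log c3 < Real.log c2 := by
      have := strictConcaveOn_log_Ioi.2 (mem_Ioi.mpr h1.1) (mem_Ioi.mpr h3.1) hne
        htpos hupos htu
      rw [smul_eq_mul, smul_eq_mul, smul_eq_mul, smul_eq_mul, hc2] at this
      exact this
    have hl2 : t * Real.log (1 - c1) + u * Real.log (1 - c3) < Real.log (1 - c2) := by
      have := strictConcaveOn_log_Ioi.2 (mem_Ioi.mpr (by linarith [h1.2] : (0:ℝ) < 1 - c1))
        (mem_Ioi.mpr (by linarith [h3.2] : (0:ℝ) < 1 - c3)) hne' htpos hupos htu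
      rw [smul_eq_mul, smul_eq_mul, smul_eq_mul, smul_eq_mul, hc2'] at this
      exact this
    have e1 : (α1 - 1) * Real.log c1 + (1 - α2) * Real.log (1 - c1)
        + (Real.log α1 - Real.log α2) = 0 := g1
    have e2 : (α1 - 1) * Real.log c2 + (1 - α2) * Real.log (1 - c2)
        + (Real.log α1 - Real.log α2) = 0 := g2
    have e3 : (α1 - 1) * Real.log c3 + (1 - α2) * Real.log (1 - c3)
        + (Real.log α1 - Real.log α2) = 0 := g3
    have m1 := mul_lt_mul_of_pos_left hl1 hα11
    have m2 := mul_lt_mul_of_pos_left hl2 (by linarith : (0:ℝ) < 1 - α2)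
    have hC : t * (Real.log α1 - Real.log α2) + u * (Real.log α1 - Real.log α2)
        = Real.log α1 - Real.log α2 := by
      have : (t + u) * (Real.log α1 - Real.log α2) = 1 * (Real.log α1 - Real.log α2) := by
        rw [htu]
      linarith [this]
    have f1 : t * ((α1 - 1) * Real.log c1 + (1 - α2) * Real.log (1 - c1)
        + (Real.log α1 - Real.log α2)) = 0 := by rw [e1, mul_zero]
    have f3 : u * ((α1 - 1) * Real.log c3 + (1 - α2) * Real.log (1 - c3)
        + (Real.log α1 - Real.log α2)) = 0 := by rw [e3, mul_zero]
    nlinarith [m1, m2, e2, hC, f1, f3]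
  have rolle : ∀ a b : ℝ, 0 ≤ a → b ≤ 1 → a < b → w a = 0 → w b = 0 →
      ∃ c ∈ Ioo a b, W' c = 0 := by
    intro a b ha hb hab hwa hwb
    apply exists_hasDerivAt_eq_zero hab hwcont.continuousOn (hwa.trans hwb.symm)
    intro x hx
    exact hderiv x ⟨lt_of_le_of_lt ha hx.1, lt_of_lt_of_le hx.2 hb⟩
  have key : ∀ u v : ℝ, u ∈ Ioo (0:ℝ) 1 → v ∈ Ioo (0:ℝ) 1 → u < v →
      w u = 0 → w v = 0 → False := by
    intro u v hu hv huv hwu hwv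
    obtain ⟨c1, hc1, hc1'⟩ := rolle 0 u le_rfl hu.2.le hu.1 hw0 hwu
    obtain ⟨c2, hc2, hc2'⟩ := rolle u v hu.1.le hv.2.le huv hwu hwv
    obtain ⟨c3, hc3, hc3'⟩ := rolle v 1 hv.1.le le_rfl hv.2 hwv hw1
    have hc1I : c1 ∈ Ioo (0:ℝ) 1 := ⟨hc1.1, lt_trans hc1.2 (lt_trans huv hv.2)⟩
    have hc2I : c2 ∈ Ioo (0:ℝ) 1 := ⟨lt_trans hu.1 hc2.1, lt_trans hc2.2 hv.2⟩
    have hc3I : c3 ∈ Ioo (0:ℝ) 1 := ⟨lt_trans hv.1 hc3.1, hc3.2⟩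
    exact hG3 c1 c2 c3 hc1I hc2I hc3I (lt_trans hc1.2 hc2.1) (lt_trans hc2.2 hc3.1)
      (hWG c1 hc1I hc1') (hWG c2 hc2I hc2') (hWG c3 hc3I hc3')
  -- a point a near 0 with w a > 0
  obtain ⟨a, hapos, ha4, haexp⟩ : ∃ a : ℝ, 0 < a ∧ a ≤ 1/4 ∧ a ^ (α1 - 1) < α2 := by
    have hApos : 0 < α2 ^ (α1 - 1)⁻¹ := Real.rpow_pos_of_pos hα2pos _
    refine ⟨min (1/4) (α2 ^ (α1 - 1)⁻¹ / 2), lt_min (by norm_num) (by linarith),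
      min_le_left _ _, ?_⟩
    have haA : min (1/4) (α2 ^ (α1 - 1)⁻¹ / 2) < α2 ^ (α1 - 1)⁻¹ :=
      lt_of_le_of_lt (min_le_right _ _) (by linarith)
    have h := Real.rpow_lt_rpow (le_of_lt (lt_min (by norm_num) (by linarith))) haA hα11
    rwa [← Real.rpow_mul hα2pos.le, inv_mul_cancel₀ hα11.ne', Real.rpow_one] at h
  have hwa : 0 < w a := by
    have hber : (1 - a) ^ α2 ≤ 1 + α2 * (-a) := by
      have := rpow_one_add_le_one_add_mul_self (s := -a) (by linarith) hα2pos.le hα2'.le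
      simpa [sub_eq_add_neg] using this
    have hsplit : a ^ α1 = a ^ (α1 - 1) * a := by
      have h := Real.rpow_add hapos (α1 - 1) 1
      rw [Real.rpow_one, sub_add_cancel] at h
      exact h
    have hlt : a ^ α1 < α2 * a := by
      rw [hsplit]; exact mul_lt_mul_of_pos_right haexp hapos
    show 0 < (1 - (1 - a) ^ α2) - a ^ α1
    nlinarith
  -- a point b near 1 with w b < 0
  obtain ⟨ε, hεpos, hε4, hεexp⟩ : ∃ ε : ℝ, 0 < ε ∧ ε ≤ 1/4 ∧ α1 < ε ^ (α2 - 1) := by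
    have hBpos : 0 < α1 ^ (α2 - 1)⁻¹ := Real.rpow_pos_of_pos hα1pos _
    refine ⟨min (1/4) (α1 ^ (α2 - 1)⁻¹ / 2), lt_min (by norm_num) (by linarith),
      min_le_left _ _, ?_⟩
    have hεB : min (1/4) (α1 ^ (α2 - 1)⁻¹ / 2) < α1 ^ (α2 - 1)⁻¹ :=
      lt_of_le_of_lt (min_le_right _ _) (by linarith)
    have h := Real.rpow_lt_rpow_of_neg (lt_min (by norm_num) (by linarith)) hεB hα21
    rwa [← Real.rpow_mul hα1pos.le, inv_mul_cancel₀ (by linarith : α2 - 1 ≠ 0),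
      Real.rpow_one] at h
  have hwb : w (1 - ε) < 0 := by
    have h1 : 1 + α1 * (-ε) ≤ (1 - ε) ^ α1 := by
      have := one_add_mul_self_le_rpow_one_add (s := -ε) (by linarith) hα1.le
      simpa [sub_eq_add_neg] using this
    have hsplit : ε ^ α2 = ε ^ (α2 - 1) * ε := by
      have h := Real.rpow_add hεpos (α2 - 1) 1
      rw [Real.rpow_one, sub_add_cancel] at h
      exact h
    have h2 : α1 * ε < ε ^ α2 := by
      rw [hsplit]; exact mul_lt_mul_of_pos_right hεexp hεpos
    show (1 - (1 - (1 - ε)) ^ α2) - (1 - ε) ^ α1 < 0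
    have hee : (1:ℝ) - (1 - ε) = ε := by ring
    rw [hee]
    nlinarith
  have hab : a < 1 - ε := by linarith
  obtain ⟨x₀, hx₀mem, hx₀⟩ : ∃ x₀ ∈ Icc a (1 - ε), w x₀ = 0 := by
    have h := intermediate_value_Icc' hab.le hwcont.continuousOn
    have h0 : (0:ℝ) ∈ Icc (w (1 - ε)) (w a) := ⟨hwb.le, hwa.le⟩
    obtain ⟨x₀, hx₀, hx₀'⟩ := h h0
    exact ⟨x₀, hx₀, hx₀'⟩
  have hx₀I : x₀ ∈ Ioo (0:ℝ) 1 := ⟨by linarith [hx₀mem.1], by linarith [hx₀mem.2]⟩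
  have hzero_iff : ∀ x : ℝ, (x ^ α1 + (1 - x) ^ α2 = 1) ↔ w x = 0 := by
    intro x
    constructor
    · intro h; show (1 - (1 - x) ^ α2) - x ^ α1 = 0; linarith
    · intro h; have h' : (1 - (1 - x) ^ α2) - x ^ α1 = 0 := h; linarith
  refine ⟨?_, ?_, ?_⟩
  · simp [Real.zero_rpow hα1pos.ne', Real.one_rpow]
  · simp [Real.zero_rpow hα2pos.ne', Real.one_rpow]
  · refine ⟨x₀, ⟨hx₀I, (hzero_iff x₀).mpr hx₀⟩, ?_⟩
    rintro y ⟨hyI, hyeq⟩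
    have hwy : w y = 0 := (hzero_iff y).mp hyeq
    rcases lt_trichotomy y x₀ with h | h | h
    · exact absurd (key y x₀ hyI hx₀I h hwy hx₀) not_false
    · exact h
    · exact absurd (key x₀ y hx₀I hyI h hx₀ hwy) not_false
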